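/- Let 𝔠 be a complex subspace of E, let 𝔯 be a totally real subspace of E orthogonal to 𝔠, let T ∈ 𝔯, and let W ∈ E be orthogonal to 𝔠 ⊕ ℂ𝔯 (where ℂ𝔯 = 𝔯 + J𝔯). Then exp(ad(2JT+2W))(ℝB ⊕ 𝔠 ⊕ 𝔯 ⊕ ℝZ) is a CR subspace of 𝔰 if and only if W = 0; in that case its maximal complex subspace is ℝ(B − JT) ⊕ ℝ(T + Z) ⊕ 𝔠, whose orthogonal complement (𝔯 ⊖ ℝT) ⊕ ℝ(T − ‖T‖²Z) is totally real. -/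

import Mathlib

open scoped RealInnerProductSpace

noncomputable section

namespace CHn

/-- `E n` is `ℂ^{n-1}`, viewed as a real inner product space with `⟪U,V⟫ = Re⟪U,V⟫_ℂ`
and complex structure `JU = iU`. -/
abbrev E (n : ℕ) := EuclideanSpace ℂ (Fin (n - 1))

/-- The solvable part `𝔰 = 𝔞 ⊕ 𝔫` of the Iwasawa decomposition of `𝔰𝔲(1,n)`, modeled as
`ℝB ⊕ E ⊕ ℝZ`; the element `(a, U, x)` represents `aB + U + xZ`. -/
abbrev S (n : ℕ) := ℝ × E n × ℝ

variable (n : ℕ)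

/-- The vector `B`. -/
def B : S n := (1, 0, 0)

/-- The vector `Z`. -/
def Z : S n := (0, 0, 1)

/-- The inner product of `𝔰` (`B`, `Z` unit, orthogonal direct sum `ℝB ⊕ E ⊕ ℝZ`). -/
def sInner (X Y : S n) : ℝ := X.1 * Y.1 + ⟪X.2.1, Y.2.1⟫ + X.2.2 * Y.2.2

/-- The ambient complex structure on `𝔰`: `J(aB + U + xZ) = -xB + JU + aZ`. -/
def Js : S n →ₗ[ℝ] S n where
  toFun X := (-X.2.2, Complex.I • X.2.1, X.1)
  map_add' X Y := by
    refine Prod.ext ?_ (Prod.ext ?_ ?_)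
    · simp; ring
    · simp [smul_add]
    · simp
  map_smul' c X := by
    refine Prod.ext ?_ (Prod.ext ?_ ?_)
    · simp only [Prod.smul_fst, Prod.smul_snd, smul_eq_mul, RingHom.id_apply]; ring
    · simp [Prod.smul_fst, Prod.smul_snd, smul_comm c Complex.I]
    · simp

/-- The Lie bracket of `𝔰`:
`[aB + U + xZ, bB + V + yZ] = (1/2)(aV - bU) + (ay - bx + ⟪JU, V⟫)Z`. -/
def bra (X Y : S n) : S n :=
  (0, (2⁻¹ : ℝ) • (X.1 • Y.2.1 - Y.1 • X.2.1),
    X.1 * Y.2.2 - Y.1 * X.2.2 + ⟪Complex.I • X.2.1, Y.2.1⟫)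

/-- `ad(X) = [X, ·]`, a (continuous) linear endomorphism of `𝔰`. -/
def ad (X : S n) : S n →L[ℝ] S n :=
  LinearMap.toContinuousLinearMap
    { toFun := bra n X
      map_add' := fun Y Y' => by
        unfold bra
        refine Prod.ext ?_ (Prod.ext ?_ ?_)
        · simp
        · simp only [Prod.fst_add, Prod.snd_add]
          module
        · simp only [Prod.fst_add, Prod.snd_add, inner_add_right]
          ring
      map_smul' := fun c Y => by
        unfold bra
        have h : ⟪Complex.I • X.2.1, c • Y.2.1⟫ = c * ⟪Complex.I • X.2.1, Y.2.1⟫ :=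
          real_inner_smul_right _ _ _
        refine Prod.ext ?_ (Prod.ext ?_ ?_)
        · simp
        · simp only [Prod.smul_fst, Prod.smul_snd, smul_eq_mul, RingHom.id_apply]
          module
        · simp only [Prod.smul_fst, Prod.smul_snd, smul_eq_mul, h, RingHom.id_apply]
          ring }

/-- `exp(ad(X)) = Σ_{k ≥ 0} ad(X)^k / k!`. -/
def expAd (X : S n) : S n →L[ℝ] S n := NormedSpace.exp (ad n X)

/-- `ρ(t) = (e^t - 1)/t` for `t ≠ 0`, `ρ(0) = 1`. -/
def rho (t : ℝ) : ℝ := if t = 0 then 1 else (Real.exp t - 1) / t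

/-- The Iwasawa group `AN`, modeled as `G = ℝ × E × ℝ`. -/
abbrev G (n : ℕ) := ℝ × E n × ℝ

/-- The product of `G`:
`(a,P,p)·(b,Q,q) = (a+b, P + e^{a/2}Q, p + e^a q + (1/2)e^{a/2}⟪JP,Q⟫)`. -/
def gmul (g h : G n) : G n :=
  (g.1 + h.1, g.2.1 + Real.exp (g.1 / 2) • h.2.1,
    g.2.2 + Real.exp g.1 * h.2.2 + 2⁻¹ * Real.exp (g.1 / 2) * ⟪Complex.I • g.2.1, h.2.1⟫)

/-- The Lie exponential `Exp : 𝔰 → G`, `Exp(cB + W + zZ) = (c, ρ(c/2)W, ρ(c)z)`. -/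
def Exp (X : S n) : G n := (X.1, rho (X.1 / 2) • X.2.1, rho X.1 * X.2.2)

/-- The inclusion of `E` into `𝔰`. -/
def inE : E n →ₗ[ℝ] S n where
  toFun U := (0, U, 0)
  map_add' U V := by refine Prod.ext ?_ (Prod.ext ?_ ?_) <;> simp
  map_smul' c U := by refine Prod.ext ?_ (Prod.ext ?_ ?_) <;> simp

/-- A real subspace of `E` is totally real if `⟪Ju, v⟫ = 0` for all its elements. -/
def TotallyRealE (V : Submodule ℝ (E n)) : Prop :=
  ∀ u ∈ V, ∀ v ∈ V, ⟪Complex.I • u, v⟫ = 0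

/-- A real subspace of `E` is complex if it is `J`-invariant. -/
def IsComplexE (V : Submodule ℝ (E n)) : Prop :=
  ∀ u ∈ V, Complex.I • u ∈ V

/-- The maximal complex subspace `V ∩ JV` of a real subspace `V` of `E`. -/
def maxCE (V : Submodule ℝ (E n)) : Set (E n) := {w | w ∈ V ∧ Complex.I • w ∈ V}

/-- `V` is a CR subspace of `E` if the orthogonal complement in `V` of its maximal
complex subspace `V ∩ JV` is totally real. -/
def IsCRE (V : Submodule ℝ (E n)) : Prop :=
  ∀ u ∈ V, ∀ v ∈ V, (∀ w ∈ maxCE n V, ⟪u, w⟫ = 0) →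
    (∀ w ∈ maxCE n V, ⟪v, w⟫ = 0) → ⟪Complex.I • u, v⟫ = 0

/-- A subset of `𝔰` is totally real if `⟪Ju, v⟫ = 0` for all its elements. -/
def TotallyRealS (V : Set (S n)) : Prop := ∀ u ∈ V, ∀ v ∈ V, sInner n (Js n u) v = 0

/-- The maximal complex subspace `V ∩ JV` of a real subspace `V` of `𝔰`. -/
def maxCS (V : Set (S n)) : Set (S n) := {x | x ∈ V ∧ Js n x ∈ V}

/-- `V` is a CR subspace of `𝔰` if the orthogonal complement in `V` of its maximal
complex subspace `V ∩ JV` is totally real. -/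
def IsCRS (V : Set (S n)) : Prop :=
  ∀ u ∈ V, ∀ v ∈ V, (∀ w ∈ maxCS n V, sInner n u w = 0) →
    (∀ w ∈ maxCS n V, sInner n v w = 0) → sInner n (Js n u) v = 0


/-! ### Auxiliary lemmas -/

set_option maxHeartbeats 1000000 in
set_option synthInstance.maxHeartbeats 400000 in
/-- exponential of a square-zero operator -/
theorem exp_sq_zero {n : ℕ} (A : S n →L[ℝ] S n) (h : A * A = 0) :
    NormedSpace.exp A = 1 + A := by
  rw [NormedSpace.exp_eq_tsum (𝕂 := ℝ)]
  simp only []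
  rw [tsum_eq_sum (s := {0, 1}) ?_]
  · simp [Finset.sum_pair]
  · intro k hk
    simp only [Finset.mem_insert, Finset.mem_singleton, not_or] at hk
    have : A ^ k = 0 := by
      calc A ^ k = A * A * A ^ (k - 2) := by rw [← pow_two, ← pow_add]; congr 1; omega
      _ = 0 := by rw [h, zero_mul]
    simp [this]

variable {n : ℕ}

theorem rinner_I_left (u v : E n) : ⟪Complex.I • u, v⟫ = -⟪u, Complex.I • v⟫ := by
  rw [PiLp.inner_apply, PiLp.inner_apply, ← Finset.sum_neg_distrib]
  refine Finset.sum_congr rfl fun i _ => ?_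
  simp [Complex.inner, Complex.mul_re, Complex.mul_im]
  ring

theorem rinner_I_I (u v : E n) : ⟪Complex.I • u, Complex.I • v⟫ = ⟪u, v⟫ := by
  rw [PiLp.inner_apply, PiLp.inner_apply]
  refine Finset.sum_congr rfl fun i _ => ?_
  simp [Complex.inner, Complex.mul_re, Complex.mul_im]

theorem rinner_I_self (u : E n) : ⟪Complex.I • u, u⟫ = 0 := by
  rw [PiLp.inner_apply]
  refine Finset.sum_eq_zero fun i _ => ?_
  simp [Complex.inner, Complex.mul_re, Complex.mul_im]
  ring

theorem ad_zero_apply (U : E n) (Y : S n) :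
    ad n ((0, U, 0) : S n) Y = (0, (-(2⁻¹ * Y.1)) • U, ⟪Complex.I • U, Y.2.1⟫) := by
  show bra n _ _ = _
  unfold bra
  refine Prod.ext rfl (Prod.ext ?_ ?_)
  · show (2⁻¹ : ℝ) • ((0:ℝ) • Y.2.1 - Y.1 • U) = _
    simp [smul_smul]
  · show (0:ℝ) * Y.2.2 - Y.1 * 0 + ⟪Complex.I • U, Y.2.1⟫ = _
    ring_nf

theorem ad_sq_zero (U : E n) : ad n ((0, U, 0) : S n) * ad n ((0, U, 0) : S n) = 0 := by
  refine ContinuousLinearMap.ext fun Y => ?_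
  rw [ContinuousLinearMap.mul_apply, ad_zero_apply, ad_zero_apply]
  refine Prod.ext rfl (Prod.ext ?_ ?_)
  · simp
  · show ⟪Complex.I • U, (-(2⁻¹ * Y.1)) • U⟫ = _
    rw [real_inner_smul_right, rinner_I_self]
    simp

theorem expAd_zero_apply (U : E n) (Y : S n) :
    expAd n ((0, U, 0) : S n) Y =
      (Y.1, Y.2.1 + (-(2⁻¹ * Y.1)) • U, Y.2.2 + ⟪Complex.I • U, Y.2.1⟫) := by
  unfold expAd
  rw [exp_sq_zero _ (ad_sq_zero U), ContinuousLinearMap.add_apply, ContinuousLinearMap.one_apply,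
    ad_zero_apply]
  refine Prod.ext ?_ (Prod.ext rfl rfl) <;> simp

/-- abbreviation for `JT + W` -/
def Kv (T W : E n) : E n := Complex.I • T + W

theorem expAd_K_apply (T W : E n) (Y : S n) :
    expAd n ((0, (2 : ℝ) • (Complex.I • T) + (2 : ℝ) • W, 0) : S n) Y =
      (Y.1, Y.2.1 - Y.1 • Kv T W, Y.2.2 + 2 * ⟪Complex.I • Kv T W, Y.2.1⟫) := by
  have hU : ((2 : ℝ) • (Complex.I • T) + (2 : ℝ) • W : E n) = (2 : ℝ) • Kv T W := by
    rw [Kv, smul_add]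
  rw [hU, expAd_zero_apply]
  refine Prod.ext rfl (Prod.ext ?_ ?_)
  · show Y.2.1 + (-(2⁻¹ * Y.1)) • ((2:ℝ) • Kv T W) = Y.2.1 - Y.1 • Kv T W
    rw [smul_smul, show -(2⁻¹ * Y.1) * 2 = -Y.1 by ring, neg_smul, ← sub_eq_add_neg]
  · show Y.2.2 + ⟪Complex.I • ((2:ℝ) • Kv T W), Y.2.1⟫ = _
    rw [smul_comm, real_inner_smul_left]

theorem mem_P_iff (𝔠 𝔯 : Submodule ℝ (E n)) (v : S n) :
    v ∈ (Submodule.span ℝ {B n} ⊔ Submodule.map (inE n) 𝔠 ⊔ Submodule.map (inE n) 𝔯 ⊔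
        Submodule.span ℝ {Z n}) ↔ ∃ C ∈ 𝔠, ∃ R ∈ 𝔯, v.2.1 = C + R := by
  constructor
  · intro hv
    obtain ⟨p, hp, q, hq, rfl⟩ := Submodule.mem_sup.1 hv
    obtain ⟨p1, hp1, p2, hp2, rfl⟩ := Submodule.mem_sup.1 hp
    obtain ⟨p3, hp3, p4, hp4, rfl⟩ := Submodule.mem_sup.1 hp1
    obtain ⟨s, rfl⟩ := Submodule.mem_span_singleton.1 hp3
    obtain ⟨t, rfl⟩ := Submodule.mem_span_singleton.1 hq
    obtain ⟨C, hC, rfl⟩ := hp4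
    obtain ⟨R, hR, rfl⟩ := hp2
    refine ⟨C, hC, R, hR, ?_⟩
    show (s • B n).2.1 + (inE n C).2.1 + (inE n R).2.1 + (t • Z n).2.1 = C + R
    show s • (B n).2.1 + C + R + t • (Z n).2.1 = C + R
    show s • (0 : E n) + C + R + t • (0 : E n) = C + R
    simp
  · rintro ⟨C, hC, R, hR, h⟩
    have hv : v = v.1 • B n + inE n C + inE n R + v.2.2 • Z n := by
      refine Prod.ext ?_ (Prod.ext ?_ ?_)
      · show v.1 = v.1 * 1 + 0 + 0 + v.2.2 * 0; ring
      · show v.2.1 = v.1 • (0 : E n) + C + R + v.2.2 • (0 : E n); simp [h]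
      · show v.2.2 = v.1 * 0 + 0 + 0 + v.2.2 * 1; ring
    rw [hv]
    refine add_mem (add_mem (add_mem ?_ ?_) ?_) ?_
    · exact Submodule.mem_sup_left <| Submodule.mem_sup_left <| Submodule.mem_sup_left <|
        Submodule.smul_mem _ _ (Submodule.mem_span_singleton_self _)
    · exact Submodule.mem_sup_left <| Submodule.mem_sup_left <| Submodule.mem_sup_right
        ⟨C, hC, rfl⟩
    · exact Submodule.mem_sup_left <| Submodule.mem_sup_right ⟨R, hR, rfl⟩
    · exact Submodule.mem_sup_right <| Submodule.smul_mem _ _ (Submodule.mem_span_singleton_self _)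

theorem mem_V_iff (𝔠 𝔯 : Submodule ℝ (E n)) (T W : E n) (v : S n) :
    v ∈ Submodule.map
        (expAd n ((0, (2 : ℝ) • (Complex.I • T) + (2 : ℝ) • W, 0) : S n)).toLinearMap
        (Submodule.span ℝ {B n} ⊔ Submodule.map (inE n) 𝔠 ⊔ Submodule.map (inE n) 𝔯 ⊔
          Submodule.span ℝ {Z n}) ↔
      ∃ C ∈ 𝔠, ∃ R ∈ 𝔯, v.2.1 = C + R - v.1 • Kv T W := by
  constructor
  · rintro ⟨y, hy, rfl⟩
    obtain ⟨C, hC, R, hR, h⟩ := (mem_P_iff 𝔠 𝔯 y).1 hy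
    refine ⟨C, hC, R, hR, ?_⟩
    show (expAd n _ y).2.1 = C + R - (expAd n _ y).1 • Kv T W
    rw [expAd_K_apply, h]
  · rintro ⟨C, hC, R, hR, h⟩
    refine ⟨(v.1, C + R, v.2.2 - 2 * ⟪Complex.I • Kv T W, C + R⟫), ?_, ?_⟩
    · exact (mem_P_iff 𝔠 𝔯 _).2 ⟨C, hC, R, hR, rfl⟩
    · show expAd n _ _ = v
      rw [expAd_K_apply]
      exact Prod.ext rfl (Prod.ext h.symm (by ring))

theorem mem_sup3 (p q : S n) (𝔠 : Submodule ℝ (E n)) (x : S n) :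
    x ∈ (Submodule.span ℝ {p} ⊔ Submodule.span ℝ {q} ⊔ Submodule.map (inE n) 𝔠) ↔
      ∃ a b : ℝ, ∃ C ∈ 𝔠, x = a • p + b • q + (0, C, 0) := by
  constructor
  · intro hx
    obtain ⟨y, hy, z, hz, rfl⟩ := Submodule.mem_sup.1 hx
    obtain ⟨y1, hy1, y2, hy2, rfl⟩ := Submodule.mem_sup.1 hy
    obtain ⟨a, rfl⟩ := Submodule.mem_span_singleton.1 hy1
    obtain ⟨b, rfl⟩ := Submodule.mem_span_singleton.1 hy2
    obtain ⟨C, hC, rfl⟩ := hz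
    exact ⟨a, b, C, hC, rfl⟩
  · rintro ⟨a, b, C, hC, rfl⟩
    refine add_mem (add_mem ?_ ?_) ?_
    · exact Submodule.mem_sup_left <| Submodule.mem_sup_left <|
        Submodule.smul_mem _ _ (Submodule.mem_span_singleton_self _)
    · exact Submodule.mem_sup_left <| Submodule.mem_sup_right <|
        Submodule.smul_mem _ _ (Submodule.mem_span_singleton_self _)
    · exact Submodule.mem_sup_right ⟨C, hC, rfl⟩

theorem mem_sup2 (q : S n) (M : Submodule ℝ (E n)) (x : S n) :
    x ∈ (Submodule.map (inE n) M ⊔ Submodule.span ℝ {q}) ↔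
      ∃ m ∈ M, ∃ c : ℝ, x = (0, m, 0) + c • q := by
  constructor
  · intro hx
    obtain ⟨y, hy, z, hz, rfl⟩ := Submodule.mem_sup.1 hx
    obtain ⟨m, hm, rfl⟩ := hy
    obtain ⟨c, rfl⟩ := Submodule.mem_span_singleton.1 hz
    exact ⟨m, hm, c, rfl⟩
  · rintro ⟨m, hm, c, rfl⟩
    exact add_mem (Submodule.mem_sup_left ⟨m, hm, rfl⟩)
      (Submodule.mem_sup_right <| Submodule.smul_mem _ _ (Submodule.mem_span_singleton_self _))

section Main

variable {𝔠 𝔯 : Submodule ℝ (E n)} (h𝔠 : IsComplexE n 𝔠) (h𝔯 : TotallyRealE n 𝔯)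
  (h𝔯𝔠 : ∀ u ∈ 𝔯, ∀ v ∈ 𝔠, ⟪u, v⟫ = 0)
  {T : E n} (hT : T ∈ 𝔯) {W : E n}
  (hW𝔠 : ∀ u ∈ 𝔠, ⟪W, u⟫ = 0)
  (hW𝔯 : ∀ u ∈ 𝔯, ⟪W, u⟫ = 0 ∧ ⟪W, Complex.I • u⟫ = 0)

include h𝔠 h𝔯 h𝔯𝔠 hT hW𝔠 hW𝔯

theorem mem_maxCS_iff (w : S n) :
    w ∈ maxCS n ((Submodule.map
        (expAd n ((0, (2 : ℝ) • (Complex.I • T) + (2 : ℝ) • W, 0) : S n)).toLinearMap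
        (Submodule.span ℝ {B n} ⊔ Submodule.map (inE n) 𝔠 ⊔ Submodule.map (inE n) 𝔯 ⊔
          Submodule.span ℝ {Z n}) : Submodule ℝ (S n)) : Set (S n)) ↔
      ∃ C ∈ 𝔠, ∃ a y : ℝ, a • W = 0 ∧ y • W = 0 ∧
        w = (a, C + y • T - a • Kv T W, y) := by
  have hIK : Complex.I • Kv T W = -T + Complex.I • W := by
    rw [Kv, smul_add, smul_smul, Complex.I_mul_I, neg_one_smul]
  constructor
  · rintro ⟨hw1, hw2⟩
    obtain ⟨C, hC, R, hR, h1⟩ := (mem_V_iff 𝔠 𝔯 T W w).1 hw1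
    obtain ⟨C', hC', R', hR', h2⟩ := (mem_V_iff 𝔠 𝔯 T W _).1 hw2
    set a := w.1 with ha
    set y := w.2.2 with hy
    have h2' : Complex.I • w.2.1 = C' + R' - (-y) • Kv T W := h2
    rw [h1] at h2'
    -- normalize the equation
    have EQ : Complex.I • C + Complex.I • R + a • T - a • (Complex.I • W) =
        C' + R' + y • (Complex.I • T) + y • W := by
      have e1 : Complex.I • (C + R - a • Kv T W) =
          Complex.I • C + Complex.I • R + a • T - a • (Complex.I • W) := by
        rw [smul_sub, smul_add, smul_comm Complex.I a, hIK, smul_add, smul_neg]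
        abel
      have e2 : C' + R' - (-y) • Kv T W =
          C' + R' + y • (Complex.I • T) + y • W := by
        rw [neg_smul, sub_neg_eq_add, Kv, smul_add]
        abel
      rw [← e1, ← e2]; exact h2'
    -- inner with W
    have hyW2 : y * ‖W‖ ^ 2 = 0 := by
      have hq := congrArg (fun u : E n => ⟪u, W⟫) EQ
      simp only [inner_add_left, inner_sub_left, real_inner_smul_left] at hq
      rw [real_inner_comm W (Complex.I • C), hW𝔠 _ (h𝔠 C hC),
        real_inner_comm W (Complex.I • R), (hW𝔯 R hR).2,
        real_inner_comm W T, (hW𝔯 T hT).1,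
        rinner_I_self W,
        real_inner_comm W C', hW𝔠 C' hC',
        real_inner_comm W R', (hW𝔯 R' hR').1,
        real_inner_comm W (Complex.I • T), (hW𝔯 T hT).2,
        real_inner_self_eq_norm_sq W] at hq
      linarith
    -- inner with I • W
    have haW2 : a * ‖W‖ ^ 2 = 0 := by
      have hq := congrArg (fun u : E n => ⟪u, Complex.I • W⟫) EQ
      simp only [inner_add_left, inner_sub_left, real_inner_smul_left] at hq
      rw [rinner_I_I C W, real_inner_comm W C, hW𝔠 C hC,
        rinner_I_I R W, real_inner_comm W R, (hW𝔯 R hR).1,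
        real_inner_comm (Complex.I • W) T, rinner_I_left W T, (hW𝔯 T hT).2,
        rinner_I_I W W, real_inner_self_eq_norm_sq W,
        real_inner_comm (Complex.I • W) C', rinner_I_left W C', hW𝔠 _ (h𝔠 C' hC'),
        real_inner_comm (Complex.I • W) R', rinner_I_left W R', (hW𝔯 R' hR').2,
        rinner_I_I T W, real_inner_comm W T, (hW𝔯 T hT).1,
        real_inner_comm (Complex.I • W) W, rinner_I_self W] at hq
      linarith
    -- inner with I • (R - y • T)
    have hRyT : R = y • T := by
      set D := R - y • T with hD
      have hDmem : D ∈ 𝔯 := sub_mem hR (Submodule.smul_mem _ _ hT)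
      have hq := congrArg (fun u : E n => ⟪u, Complex.I • D⟫) EQ
      simp only [inner_add_left, inner_sub_left, real_inner_smul_left] at hq
      rw [rinner_I_I C D, real_inner_comm D C, h𝔯𝔠 D hDmem C hC,
        rinner_I_I R D,
        real_inner_comm (Complex.I • D) T, h𝔯 D hDmem T hT,
        rinner_I_I W D, (hW𝔯 D hDmem).1,
        real_inner_comm (Complex.I • D) C', rinner_I_left D C', h𝔯𝔠 D hDmem _ (h𝔠 C' hC'),
        real_inner_comm (Complex.I • D) R', h𝔯 D hDmem R' hR',
        rinner_I_I T D,
        (hW𝔯 D hDmem).2] at hq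
      have hDD : ⟪D, D⟫ = 0 := by
        rw [hD, inner_sub_left, real_inner_smul_left]
        linarith
      exact sub_eq_zero.1 ((inner_self_eq_zero (𝕜 := ℝ)).1 hDD)
    have haW : a • W = 0 := by
      rcases eq_or_ne W 0 with h | h
      · rw [h, smul_zero]
      · have hW2 : ‖W‖ ^ 2 ≠ 0 := pow_ne_zero 2 (norm_ne_zero_iff.2 h)
        rw [(mul_eq_zero.1 haW2).resolve_right hW2, zero_smul]
    have hyW : y • W = 0 := by
      rcases eq_or_ne W 0 with h | h
      · rw [h, smul_zero]
      · have hW2 : ‖W‖ ^ 2 ≠ 0 := pow_ne_zero 2 (norm_ne_zero_iff.2 h)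
        rw [(mul_eq_zero.1 hyW2).resolve_right hW2, zero_smul]
    refine ⟨C, hC, a, y, haW, hyW, ?_⟩
    refine Prod.ext rfl (Prod.ext ?_ rfl)
    show w.2.1 = C + y • T - a • Kv T W
    rw [h1, hRyT]
  · rintro ⟨C, hC, a, y, haW, hyW, rfl⟩
    have ha' : a • (Complex.I • W) = 0 := by
      rw [smul_comm, haW, smul_zero]
    constructor
    · exact (mem_V_iff 𝔠 𝔯 T W _).2 ⟨C, hC, y • T, Submodule.smul_mem _ _ hT, rfl⟩
    · refine (mem_V_iff 𝔠 𝔯 T W _).2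
        ⟨Complex.I • C, h𝔠 C hC, a • T, Submodule.smul_mem _ _ hT, ?_⟩
      show Complex.I • (C + y • T - a • Kv T W) =
        Complex.I • C + a • T - (-(y : ℝ)) • Kv T W
      have hy' : y • Kv T W = y • (Complex.I • T) := by
        rw [Kv, smul_add, hyW, add_zero]
      rw [neg_smul, sub_neg_eq_add, hy', smul_sub, smul_add, smul_comm Complex.I y,
        smul_comm Complex.I a, hIK, smul_add, smul_neg, ha']
      abel

theorem key_orth (hW0 : W = 0) (v : S n)
    (hv : v ∈ Submodule.map
        (expAd n ((0, (2 : ℝ) • (Complex.I • T) + (2 : ℝ) • W, 0) : S n)).toLinearMap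
        (Submodule.span ℝ {B n} ⊔ Submodule.map (inE n) 𝔠 ⊔ Submodule.map (inE n) 𝔯 ⊔
          Submodule.span ℝ {Z n}))
    (hperp : ∀ w ∈ maxCS n ((Submodule.map
        (expAd n ((0, (2 : ℝ) • (Complex.I • T) + (2 : ℝ) • W, 0) : S n)).toLinearMap
        (Submodule.span ℝ {B n} ⊔ Submodule.map (inE n) 𝔠 ⊔ Submodule.map (inE n) 𝔯 ⊔
          Submodule.span ℝ {Z n}) : Submodule ℝ (S n)) : Set (S n)), sInner n v w = 0) :
    v.1 = 0 ∧ ∃ R ∈ 𝔯, v.2.1 = R ∧ v.2.2 = -⟪R, T⟫ := by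
  have hK : Kv T W = Complex.I • T := by rw [Kv, hW0, add_zero]
  obtain ⟨C, hC, R, hR, h1⟩ := (mem_V_iff 𝔠 𝔯 T W v).1 hv
  have hITC : ∀ C' ∈ 𝔠, ⟪Complex.I • T, C'⟫ = 0 := fun C' hC' => by
    rw [rinner_I_left, h𝔯𝔠 T hT _ (h𝔠 C' hC'), neg_zero]
  -- first component is zero
  have hv1 : v.1 = 0 := by
    have hw₁ : ((1 : ℝ), (0 : E n) + (0 : ℝ) • T - (1 : ℝ) • Kv T W, (0 : ℝ)) ∈
        maxCS n ((Submodule.map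
          (expAd n ((0, (2 : ℝ) • (Complex.I • T) + (2 : ℝ) • W, 0) : S n)).toLinearMap
          (Submodule.span ℝ {B n} ⊔ Submodule.map (inE n) 𝔠 ⊔ Submodule.map (inE n) 𝔯 ⊔
            Submodule.span ℝ {Z n}) : Submodule ℝ (S n)) : Set (S n)) :=
      (mem_maxCS_iff h𝔠 h𝔯 h𝔯𝔠 hT hW𝔠 hW𝔯 _).2
        ⟨0, zero_mem _, 1, 0, by rw [hW0, smul_zero], by rw [hW0, smul_zero], rfl⟩
    have ha := hperp _ hw₁
    have ha' : v.1 + ⟪v.2.1, (0 : E n) + (0 : ℝ) • T - (1 : ℝ) • Kv T W⟫ = 0 := by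
      simpa [sInner] using ha
    rw [h1] at ha'
    have hE : ((0 : E n) + (0 : ℝ) • T - (1 : ℝ) • Kv T W : E n) = -(Kv T W) := by
      simp
    have hCIT : ⟪C, Complex.I • T⟫ = 0 :=
      (real_inner_comm (Complex.I • T) C).trans (hITC C hC)
    have hRIT : ⟪R, Complex.I • T⟫ = 0 :=
      (real_inner_comm (Complex.I • T) R).trans (h𝔯 T hT R hR)
    have hITIT : ⟪(Complex.I • T : E n), Complex.I • T⟫ = ‖T‖ ^ 2 := by
      rw [rinner_I_I, real_inner_self_eq_norm_sq]
    have hE : ((0 : E n) + (0 : ℝ) • T - (1 : ℝ) • Kv T W : E n) = -(Kv T W) := by simp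
    rw [hE, inner_neg_right, inner_sub_left, inner_add_left, real_inner_smul_left, hK,
      hCIT, hRIT, hITIT] at ha'
    have h2 : v.1 * (1 + ‖T‖ ^ 2) = 0 := by ring_nf; ring_nf at ha'; linarith
    exact (mul_eq_zero.1 h2).resolve_right (by positivity)
  -- the 𝔠-component is zero
  have hC0 : C = 0 := by
    have hw₂ : ((0 : ℝ), C + (0 : ℝ) • T - (0 : ℝ) • Kv T W, (0 : ℝ)) ∈
        maxCS n ((Submodule.map
          (expAd n ((0, (2 : ℝ) • (Complex.I • T) + (2 : ℝ) • W, 0) : S n)).toLinearMap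
          (Submodule.span ℝ {B n} ⊔ Submodule.map (inE n) 𝔠 ⊔ Submodule.map (inE n) 𝔯 ⊔
            Submodule.span ℝ {Z n}) : Submodule ℝ (S n)) : Set (S n)) :=
      (mem_maxCS_iff h𝔠 h𝔯 h𝔯𝔠 hT hW𝔠 hW𝔯 _).2
        ⟨C, hC, 0, 0, zero_smul ℝ W, zero_smul ℝ W, rfl⟩
    have hb := hperp _ hw₂
    have hb' : ⟪v.2.1, C + (0 : ℝ) • T - (0 : ℝ) • Kv T W⟫ = 0 := by
      simpa [sInner] using hb
    have hE : (C + (0 : ℝ) • T - (0 : ℝ) • Kv T W : E n) = C := by simp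
    rw [hE, h1, hv1, zero_smul, sub_zero, inner_add_left, h𝔯𝔠 R hR C hC,
      add_zero] at hb'
    exact (inner_self_eq_zero (𝕜 := ℝ)).1 hb'
  have hv21 : v.2.1 = R := by rw [h1, hC0, hv1, zero_smul, sub_zero, zero_add]
  refine ⟨hv1, R, hR, hv21, ?_⟩
  -- third component
  have hw₃ : ((0 : ℝ), (0 : E n) + (1 : ℝ) • T - (0 : ℝ) • Kv T W, (1 : ℝ)) ∈
      maxCS n ((Submodule.map
        (expAd n ((0, (2 : ℝ) • (Complex.I • T) + (2 : ℝ) • W, 0) : S n)).toLinearMap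
        (Submodule.span ℝ {B n} ⊔ Submodule.map (inE n) 𝔠 ⊔ Submodule.map (inE n) 𝔯 ⊔
          Submodule.span ℝ {Z n}) : Submodule ℝ (S n)) : Set (S n)) :=
    (mem_maxCS_iff h𝔠 h𝔯 h𝔯𝔠 hT hW𝔠 hW𝔯 _).2
      ⟨0, zero_mem _, 0, 1, zero_smul ℝ W, by rw [hW0, smul_zero], rfl⟩
  have hc := hperp _ hw₃
  have hc' : ⟪v.2.1, (0 : E n) + (1 : ℝ) • T - (0 : ℝ) • Kv T W⟫ + v.2.2 = 0 := by
    simpa [sInner] using hc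
  have hE : ((0 : E n) + (1 : ℝ) • T - (0 : ℝ) • Kv T W : E n) = T := by simp
  rw [hE, hv21] at hc'
  linarith

end Main

theorem statement13' (n : ℕ) (hn : 2 ≤ n) (𝔠 𝔯 : Submodule ℝ (E n))
    (h𝔠 : IsComplexE n 𝔠) (h𝔯 : TotallyRealE n 𝔯)
    (h𝔯𝔠 : ∀ u ∈ 𝔯, ∀ v ∈ 𝔠, ⟪u, v⟫ = 0)
    (T : E n) (hT : T ∈ 𝔯) (W : E n)
    (hW𝔠 : ∀ u ∈ 𝔠, ⟪W, u⟫ = 0)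
    (hW𝔯 : ∀ u ∈ 𝔯, ⟪W, u⟫ = 0 ∧ ⟪W, Complex.I • u⟫ = 0) :
    (IsCRS n
      ((Submodule.map
          (expAd n ((0, (2 : ℝ) • (Complex.I • T) + (2 : ℝ) • W, 0) : S n)).toLinearMap
          (Submodule.span ℝ {B n} ⊔ Submodule.map (inE n) 𝔠 ⊔ Submodule.map (inE n) 𝔯 ⊔
            Submodule.span ℝ {Z n}) : Submodule ℝ (S n)) : Set (S n)) ↔ W = 0) := by
  constructor
  · -- IsCRS → W = 0
    intro hCR
    by_contra hW
    have hKC : ∀ C ∈ 𝔠, ⟪Kv T W, C⟫ = 0 := by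
      intro C hC
      rw [Kv, inner_add_left, rinner_I_left, h𝔯𝔠 T hT _ (h𝔠 C hC), hW𝔠 C hC, neg_zero,
        add_zero]
    have hu : ((1 : ℝ), -(Kv T W), (0 : ℝ)) ∈ Submodule.map
        (expAd n ((0, (2 : ℝ) • (Complex.I • T) + (2 : ℝ) • W, 0) : S n)).toLinearMap
        (Submodule.span ℝ {B n} ⊔ Submodule.map (inE n) 𝔠 ⊔ Submodule.map (inE n) 𝔯 ⊔
          Submodule.span ℝ {Z n}) :=
      (mem_V_iff 𝔠 𝔯 T W _).2 ⟨0, zero_mem _, 0, zero_mem _, by simp⟩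
    have hZ : Z n ∈ Submodule.map
        (expAd n ((0, (2 : ℝ) • (Complex.I • T) + (2 : ℝ) • W, 0) : S n)).toLinearMap
        (Submodule.span ℝ {B n} ⊔ Submodule.map (inE n) 𝔠 ⊔ Submodule.map (inE n) 𝔯 ⊔
          Submodule.span ℝ {Z n}) :=
      (mem_V_iff 𝔠 𝔯 T W _).2 ⟨0, zero_mem _, 0, zero_mem _, by simp [Z]⟩
    have horth : ∀ w ∈ maxCS n ((Submodule.map
        (expAd n ((0, (2 : ℝ) • (Complex.I • T) + (2 : ℝ) • W, 0) : S n)).toLinearMap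
        (Submodule.span ℝ {B n} ⊔ Submodule.map (inE n) 𝔠 ⊔ Submodule.map (inE n) 𝔯 ⊔
          Submodule.span ℝ {Z n}) : Submodule ℝ (S n)) : Set (S n)),
        sInner n ((1 : ℝ), -(Kv T W), (0 : ℝ)) w = 0 ∧ sInner n (Z n) w = 0 := by
      intro w hw
      obtain ⟨C, hC, a, y, haW, hyW, rfl⟩ :=
        (mem_maxCS_iff h𝔠 h𝔯 h𝔯𝔠 hT hW𝔠 hW𝔯 w).1 hw
      have ha0 : a = 0 := (smul_eq_zero.1 haW).resolve_right hW
      have hy0 : y = 0 := (smul_eq_zero.1 hyW).resolve_right hW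
      subst ha0 hy0
      constructor
      · show 1 * 0 + ⟪-(Kv T W), C + (0:ℝ) • T - (0:ℝ) • Kv T W⟫ + 0 * 0 = 0
        rw [inner_neg_left]
        simp [hKC C hC]
      · show 0 * 0 + ⟪(0 : E n), C + (0:ℝ) • T - (0:ℝ) • Kv T W⟫ + 1 * 0 = 0
        simp
    have := hCR _ hu _ hZ (fun w hw => (horth w hw).1) (fun w hw => (horth w hw).2)
    have hJ : sInner n (Js n ((1 : ℝ), -(Kv T W), (0 : ℝ))) (Z n) = 1 := by
      show -0 * 0 + ⟪Complex.I • -(Kv T W), (0 : E n)⟫ + 1 * 1 = 1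
      simp
    rw [this] at hJ
    norm_num at hJ
  · -- W = 0 → IsCRS
    intro hW0
    intro u hu v hv hu' hv'
    obtain ⟨hu1, Ru, hRu, hu21, _⟩ := key_orth h𝔠 h𝔯 h𝔯𝔠 hT hW𝔠 hW𝔯 hW0 u hu hu'
    obtain ⟨hv1, Rv, hRv, hv21, _⟩ := key_orth h𝔠 h𝔯 h𝔯𝔠 hT hW𝔠 hW𝔯 hW0 v hv hv'
    show -u.2.2 * v.1 + ⟪Complex.I • u.2.1, v.2.1⟫ + u.1 * v.2.2 = 0
    rw [hu1, hv1, hu21, hv21, h𝔯 Ru hRu Rv hRv]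
    ring

theorem statement13'' (n : ℕ) (𝔠 𝔯 : Submodule ℝ (E n))
    (h𝔠 : IsComplexE n 𝔠) (h𝔯 : TotallyRealE n 𝔯)
    (h𝔯𝔠 : ∀ u ∈ 𝔯, ∀ v ∈ 𝔠, ⟪u, v⟫ = 0)
    (T : E n) (hT : T ∈ 𝔯) (W : E n)
    (hW𝔠 : ∀ u ∈ 𝔠, ⟪W, u⟫ = 0)
    (hW𝔯 : ∀ u ∈ 𝔯, ⟪W, u⟫ = 0 ∧ ⟪W, Complex.I • u⟫ = 0)
    (hW0 : W = 0) :
      maxCS n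
        ((Submodule.map
            (expAd n ((0, (2 : ℝ) • (Complex.I • T) + (2 : ℝ) • W, 0) : S n)).toLinearMap
            (Submodule.span ℝ {B n} ⊔ Submodule.map (inE n) 𝔠 ⊔ Submodule.map (inE n) 𝔯 ⊔
              Submodule.span ℝ {Z n}) : Submodule ℝ (S n)) : Set (S n)) =
        ((Submodule.span ℝ {((1, -(Complex.I • T), 0) : S n)} ⊔
          Submodule.span ℝ {((0, T, 1) : S n)} ⊔ Submodule.map (inE n) 𝔠 :
            Submodule ℝ (S n)) : Set (S n)) ∧
      {v : S n |
          v ∈ (Submodule.map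
              (expAd n ((0, (2 : ℝ) • (Complex.I • T) + (2 : ℝ) • W, 0) : S n)).toLinearMap
              (Submodule.span ℝ {B n} ⊔ Submodule.map (inE n) 𝔠 ⊔ Submodule.map (inE n) 𝔯 ⊔
                Submodule.span ℝ {Z n}) : Submodule ℝ (S n)) ∧
          (∀ w ∈ maxCS n
            ((Submodule.map
                (expAd n ((0, (2 : ℝ) • (Complex.I • T) + (2 : ℝ) • W, 0) : S n)).toLinearMap
                (Submodule.span ℝ {B n} ⊔ Submodule.map (inE n) 𝔠 ⊔ Submodule.map (inE n) 𝔯 ⊔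
                  Submodule.span ℝ {Z n}) : Submodule ℝ (S n)) : Set (S n)),
            sInner n v w = 0)} =
        ((Submodule.map (inE n) (𝔯 ⊓ (Submodule.span ℝ {T})ᗮ) ⊔
          Submodule.span ℝ {((0, T, -‖T‖ ^ 2) : S n)} : Submodule ℝ (S n)) : Set (S n)) ∧
      TotallyRealS n
        ((Submodule.map (inE n) (𝔯 ⊓ (Submodule.span ℝ {T})ᗮ) ⊔
          Submodule.span ℝ {((0, T, -‖T‖ ^ 2) : S n)} : Submodule ℝ (S n)) : Set (S n)) := by
  have hK : Kv T W = Complex.I • T := by rw [Kv, hW0, add_zero]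
  have hITR : ∀ R ∈ 𝔯, ⟪R, Complex.I • T⟫ = 0 := fun R hR =>
    (real_inner_comm (Complex.I • T) R).trans (h𝔯 T hT R hR)
  refine ⟨?_, ?_, ?_⟩
  · -- maxCS equality
    ext w
    constructor
    · intro hw
      obtain ⟨C, hC, a, y, _, _, rfl⟩ := (mem_maxCS_iff h𝔠 h𝔯 h𝔯𝔠 hT hW𝔠 hW𝔯 w).1 hw
      refine (mem_sup3 _ _ _ _).2 ⟨a, y, C, hC, ?_⟩
      refine Prod.ext ?_ (Prod.ext ?_ ?_)
      · show a = a * 1 + y * 0 + 0; ring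
      · show C + y • T - a • Kv T W = a • -(Complex.I • T) + y • T + C
        rw [hK, smul_neg]; abel
      · show y = a * 0 + y * 1 + 0; ring
    · intro hw
      obtain ⟨a, y, C, hC, rfl⟩ := (mem_sup3 _ _ _ _).1 hw
      refine (mem_maxCS_iff h𝔠 h𝔯 h𝔯𝔠 hT hW𝔠 hW𝔯 _).2
        ⟨C, hC, a, y, by rw [hW0, smul_zero], by rw [hW0, smul_zero], ?_⟩
      refine Prod.ext ?_ (Prod.ext ?_ ?_)
      · show a * 1 + y * 0 + 0 = a; ring
      · show a • -(Complex.I • T) + y • T + C = C + y • T - a • Kv T W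
        rw [hK, smul_neg]; abel
      · show a * 0 + y * 1 + 0 = y; ring
  · -- orthocomplement equality
    ext v
    constructor
    · rintro ⟨hv, hperp⟩
      obtain ⟨hv1, R, hR, hv21, hv22⟩ := key_orth h𝔠 h𝔯 h𝔯𝔠 hT hW𝔠 hW𝔯 hW0 v hv hperp
      set c : ℝ := ⟪R, T⟫ / ‖T‖ ^ 2 with hc
      have hcT : c * ‖T‖ ^ 2 = ⟪R, T⟫ := by
        rcases eq_or_ne T 0 with h | h
        · rw [h]; simp
        · have h2 : ‖T‖ ^ 2 ≠ 0 := pow_ne_zero 2 (norm_ne_zero_iff.2 h)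
          rw [hc, div_mul_cancel₀ _ h2]
      refine (mem_sup2 _ _ _).2 ⟨R - c • T, Submodule.mem_inf.2
        ⟨sub_mem hR (Submodule.smul_mem _ _ hT), (Submodule.mem_orthogonal _ _).2 ?_⟩,
        c, ?_⟩
      · intro x hx
        obtain ⟨s, rfl⟩ := Submodule.mem_span_singleton.1 hx
        rw [real_inner_smul_left, inner_sub_right, real_inner_smul_right,
          real_inner_self_eq_norm_sq, hcT, real_inner_comm R T, sub_self, mul_zero]
      · refine Prod.ext ?_ (Prod.ext ?_ ?_)
        · show v.1 = 0 + c * 0; rw [hv1]; ring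
        · show v.2.1 = (R - c • T) + c • T; rw [hv21]; abel
        · show v.2.2 = 0 + c * -‖T‖ ^ 2; rw [hv22, ← hcT]; ring
    · intro hx
      obtain ⟨m, hm, c, rfl⟩ := (mem_sup2 _ _ _).1 hx
      obtain ⟨hm𝔯, hmT⟩ := hm
      have hTm : ⟪T, m⟫ = 0 := (Submodule.mem_orthogonal _ _).1 hmT T
        (Submodule.mem_span_singleton_self T)
      refine ⟨?_, ?_⟩
      · refine (mem_V_iff 𝔠 𝔯 T W _).2
          ⟨0, zero_mem _, m + c • T, add_mem hm𝔯 (Submodule.smul_mem _ _ hT), ?_⟩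
        show m + c • T = 0 + (m + c • T) - (0 + c * 0) • Kv T W
        simp
      · intro w hw
        obtain ⟨C, hC, a, y, _, _, rfl⟩ := (mem_maxCS_iff h𝔠 h𝔯 h𝔯𝔠 hT hW𝔠 hW𝔯 w).1 hw
        show (0 + c * 0) * a + ⟪m + c • T, C + y • T - a • Kv T W⟫ +
          (0 + c * -‖T‖ ^ 2) * y = 0
        rw [hK]
        simp only [inner_add_left, inner_add_right, inner_sub_right, real_inner_smul_left,
          real_inner_smul_right]
        rw [h𝔯𝔠 m hm𝔯 C hC, h𝔯𝔠 T hT C hC, real_inner_comm T m, hTm, hITR m hm𝔯,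
          hITR T hT, real_inner_self_eq_norm_sq]
        ring
  · -- totally real
    intro u hu v hv
    obtain ⟨mu, ⟨hmu, _⟩, cu, rfl⟩ := (mem_sup2 _ _ _).1 hu
    obtain ⟨mv, ⟨hmv, _⟩, cv, rfl⟩ := (mem_sup2 _ _ _).1 hv
    show -(0 + cu * -‖T‖ ^ 2) * (0 + cv * 0) +
      ⟪Complex.I • (mu + cu • T), mv + cv • T⟫ + (0 + cu * 0) * (0 + cv * -‖T‖ ^ 2) = 0
    rw [h𝔯 _ (add_mem hmu (Submodule.smul_mem _ _ hT)) _ (add_mem hmv (Submodule.smul_mem _ _ hT))]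
    ring

/-- for `𝔠` complex, `𝔯` totally real orthogonal to `𝔠`, `T ∈ 𝔯`, `W ⟂ 𝔠 ⊕ ℂ𝔯`:
`exp(ad(2JT+2W))(ℝB ⊕ 𝔠 ⊕ 𝔯 ⊕ ℝZ)` is a CR subspace of `𝔰` iff `W = 0`; in that case its
maximal complex subspace is `ℝ(B − JT) ⊕ ℝ(T + Z) ⊕ 𝔠`, whose orthogonal complement
`(𝔯 ⊖ ℝT) ⊕ ℝ(T − ‖T‖²Z)` is totally real. -/
theorem statement13 (n : ℕ) (hn : 2 ≤ n) (𝔠 𝔯 : Submodule ℝ (E n))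
    (h𝔠 : IsComplexE n 𝔠) (h𝔯 : TotallyRealE n 𝔯)
    (h𝔯𝔠 : ∀ u ∈ 𝔯, ∀ v ∈ 𝔠, ⟪u, v⟫ = 0)
    (T : E n) (hT : T ∈ 𝔯) (W : E n)
    (hW𝔠 : ∀ u ∈ 𝔠, ⟪W, u⟫ = 0)
    (hW𝔯 : ∀ u ∈ 𝔯, ⟪W, u⟫ = 0 ∧ ⟪W, Complex.I • u⟫ = 0) :
    (IsCRS n
      ((Submodule.map
          (expAd n ((0, (2 : ℝ) • (Complex.I • T) + (2 : ℝ) • W, 0) : S n)).toLinearMap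
          (Submodule.span ℝ {B n} ⊔ Submodule.map (inE n) 𝔠 ⊔ Submodule.map (inE n) 𝔯 ⊔
            Submodule.span ℝ {Z n}) : Submodule ℝ (S n)) : Set (S n)) ↔ W = 0) ∧
    (W = 0 →
      maxCS n
        ((Submodule.map
            (expAd n ((0, (2 : ℝ) • (Complex.I • T) + (2 : ℝ) • W, 0) : S n)).toLinearMap
            (Submodule.span ℝ {B n} ⊔ Submodule.map (inE n) 𝔠 ⊔ Submodule.map (inE n) 𝔯 ⊔
              Submodule.span ℝ {Z n}) : Submodule ℝ (S n)) : Set (S n)) =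
        ((Submodule.span ℝ {((1, -(Complex.I • T), 0) : S n)} ⊔
          Submodule.span ℝ {((0, T, 1) : S n)} ⊔ Submodule.map (inE n) 𝔠 :
            Submodule ℝ (S n)) : Set (S n)) ∧
      {v : S n |
          v ∈ (Submodule.map
              (expAd n ((0, (2 : ℝ) • (Complex.I • T) + (2 : ℝ) • W, 0) : S n)).toLinearMap
              (Submodule.span ℝ {B n} ⊔ Submodule.map (inE n) 𝔠 ⊔ Submodule.map (inE n) 𝔯 ⊔
                Submodule.span ℝ {Z n}) : Submodule ℝ (S n)) ∧
          (∀ w ∈ maxCS n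
            ((Submodule.map
                (expAd n ((0, (2 : ℝ) • (Complex.I • T) + (2 : ℝ) • W, 0) : S n)).toLinearMap
                (Submodule.span ℝ {B n} ⊔ Submodule.map (inE n) 𝔠 ⊔ Submodule.map (inE n) 𝔯 ⊔
                  Submodule.span ℝ {Z n}) : Submodule ℝ (S n)) : Set (S n)),
            sInner n v w = 0)} =
        ((Submodule.map (inE n) (𝔯 ⊓ (Submodule.span ℝ {T})ᗮ) ⊔
          Submodule.span ℝ {((0, T, -‖T‖ ^ 2) : S n)} : Submodule ℝ (S n)) : Set (S n)) ∧
      TotallyRealS n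
        ((Submodule.map (inE n) (𝔯 ⊓ (Submodule.span ℝ {T})ᗮ) ⊔
          Submodule.span ℝ {((0, T, -‖T‖ ^ 2) : S n)} : Submodule ℝ (S n)) : Set (S n))) :=
  ⟨statement13' n hn 𝔠 𝔯 h𝔠 h𝔯 h𝔯𝔠 T hT W hW𝔠 hW𝔯, fun hW0 =>
    statement13'' n 𝔠 𝔯 h𝔠 h𝔯 h𝔯𝔠 T hT W hW𝔠 hW𝔯 hW0⟩

end CHn
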